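/- For any finite group π and any π-lattice M, there exists a short exact sequence of π-lattices 0 → M → P → F → 0 where P is a permutation lattice and F is a flabby lattice. -/

import Mathlib

/-- A permutation `π`-lattice: equivariantly isomorphic to `ι →₀ ℤ` with `π`
permuting the basis `ι`. -/
def IsPermutationLattice (π : Type*) [Group π] (M : Type*) [AddCommGroup M]
    [DistribMulAction π M] : Prop :=
  ∃ (ι : Type) (_ : Fintype ι) (σ : π →* Equiv.Perm ι) (e : M ≃+ (ι →₀ ℤ)),
    ∀ (g : π) (m : M), e (g • m) = Finsupp.equivMapDomain (σ g) (e m)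

/-- An invertible (permutation projective) `π`-lattice: a direct summand of a
permutation lattice. -/
def IsInvertibleLattice (π : Type*) [Group π] (M : Type*) [AddCommGroup M]
    [DistribMulAction π M] : Prop :=
  ∃ (ι : Type) (_ : Fintype ι) (σ : π →* Equiv.Perm ι)
    (s : M →+ (ι →₀ ℤ)) (p : (ι →₀ ℤ) →+ M),
    (∀ (g : π) (m : M), s (g • m) = Finsupp.equivMapDomain (σ g) (s m)) ∧
    (∀ (g : π) (f : ι →₀ ℤ), p (Finsupp.equivMapDomain (σ g) f) = g • p f) ∧
    ∀ m, p (s m) = m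

/-- Flabby: Tate cohomology `Ĥ⁻¹(H, M) = 0` for every subgroup `H`, i.e. every
element killed by the norm of `H` lies in the subgroup generated by elements
`h • y - y`. -/
def IsFlabby (π : Type*) [Group π] (M : Type*) [AddCommGroup M]
    [DistribMulAction π M] : Prop :=
  ∀ (H : Subgroup π) [Fintype H] (m : M),
    (∑ h : H, (h : π) • m) = 0 →
      m ∈ AddSubgroup.closure {x : M | ∃ (h : H) (y : M), x = (h : π) • y - y}

/-- Coflabby: `H¹(H, M) = 0` for every subgroup `H`, i.e. every 1-cocycle is a
1-coboundary. -/
def IsCoflabby (π : Type*) [Group π] (M : Type*) [AddCommGroup M]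
    [DistribMulAction π M] : Prop :=
  ∀ (H : Subgroup π) (f : H → M),
    (∀ g h : H, f (g * h) = f g + (g : π) • f h) →
      ∃ m : M, ∀ g : H, f g = (g : π) • m - m

/-- A bundled `π`-module (carrier with an additive action of `π`). -/
structure GLat (π : Type) [Group π] where
  carrier : Type
  [acg : AddCommGroup carrier]
  [act : DistribMulAction π carrier]

attribute [instance] GLat.acg GLat.act

/-- Similarity of `π`-lattices: `M ⊕ Q₁ ≅ N ⊕ Q₂` equivariantly for some
permutation lattices `Q₁`, `Q₂`. -/
def SimilarLattice (π : Type*) [Group π] (M N : Type*) [AddCommGroup M]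
    [DistribMulAction π M] [AddCommGroup N] [DistribMulAction π N] : Prop :=
  ∃ (ι κ : Type) (_ : Fintype ι) (_ : Fintype κ) (σ : π →* Equiv.Perm ι)
    (τ : π →* Equiv.Perm κ) (e : M × (ι →₀ ℤ) ≃+ N × (κ →₀ ℤ)),
    ∀ (g : π) (m : M) (f : ι →₀ ℤ),
      e (g • m, Finsupp.equivMapDomain (σ g) f) =
        (g • (e (m, f)).1, Finsupp.equivMapDomain (τ g) (e (m, f)).2)

/-- A flabby resolution `0 → M → P → F → 0` of `M`: `P` is a permutation
lattice (modelled as `ι →₀ ℤ`) and `F` is flabby. -/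
def FlabbyResolution (π : Type*) [Group π] (M F : Type*) [AddCommGroup M]
    [DistribMulAction π M] [AddCommGroup F] [DistribMulAction π F] : Prop :=
  ∃ (ι : Type) (_ : Fintype ι) (σ : π →* Equiv.Perm ι)
    (i : M →+ (ι →₀ ℤ)) (p : (ι →₀ ℤ) →+ F),
    (∀ (g : π) (m : M), i (g • m) = Finsupp.equivMapDomain (σ g) (i m)) ∧
    (∀ (g : π) (f : ι →₀ ℤ), p (Finsupp.equivMapDomain (σ g) f) = g • p f) ∧
    Function.Injective i ∧ Function.Surjective p ∧
    (∀ f : ι →₀ ℤ, p f = 0 ↔ f ∈ Set.range i) ∧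
    IsFlabby π F

/-- `[M]ᶠˡ` is invertible: some flabby resolution `0 → M → P → F → 0` has `F`
similar to an invertible lattice `E`. -/
def FlabbyClassInvertible (π : Type) [Group π] (M : Type*) [AddCommGroup M]
    [DistribMulAction π M] : Prop :=
  ∃ (F E : GLat π), (Module.Free ℤ F.carrier ∧ Module.Finite ℤ F.carrier) ∧
    (Module.Free ℤ E.carrier ∧ Module.Finite ℤ E.carrier) ∧
    FlabbyResolution π M F.carrier ∧ IsInvertibleLattice π E.carrier ∧
    SimilarLattice π F.carrier E.carrier

section AuxiliaryForFlabbyResolution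

open Module

theorem bdual {K : Type*} [AddCommGroup K] [Module.Free ℤ K] [Module.Finite ℤ K]
    (N : Submodule ℤ K) (m : K) (hm : m ∉ N) :
    ∃ u : K →ₗ[ℤ] ℚ, (∀ x ∈ N, ∃ z : ℤ, u x = (z : ℚ)) ∧ ∀ z : ℤ, u m ≠ (z : ℚ) := by
  classical
  let b := Module.Free.chooseBasis ℤ K
  obtain ⟨n, snf⟩ := N.smithNormalForm b
  have hNcoord : ∀ x ∈ N, ∀ i : Fin n, snf.a i ∣ snf.bM.repr x (snf.f i) := by
    intro x hx i
    rw [snf.repr_apply_embedding_eq_repr_smul (m := ⟨x, hx⟩) (i := i), map_smul]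
    exact Dvd.intro _ rfl
  have hNzero : ∀ x ∈ N, ∀ j, j ∉ Set.range snf.f → snf.bM.repr x j = 0 := by
    intro x hx j hj
    exact snf.repr_eq_zero_of_notMem_range ⟨x, hx⟩ hj
  have ha : ∀ i, snf.a i ≠ 0 := by
    intro i hai
    have h0 : (snf.bN i : K) = 0 := by rw [snf.snf i, hai, zero_smul]
    exact snf.bN.ne_zero i (Subtype.coe_injective h0)
  by_cases h1 : ∀ i : Fin n, snf.a i ∣ snf.bM.repr m (snf.f i)
  · by_cases h2 : ∀ j ∉ Set.range snf.f, snf.bM.repr m j = 0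
    · exfalso
      apply hm
      choose d hd using h1
      have key : m = ∑ i : Fin n, d i • (snf.bN i : K) := by
        have hm' : m = ∑ j, snf.bM.repr m j • snf.bM j := (snf.bM.sum_repr m).symm
        have hsub : ∑ j ∈ (Finset.univ.image snf.f), snf.bM.repr m j • snf.bM j
            = ∑ j : Free.ChooseBasisIndex ℤ K, snf.bM.repr m j • snf.bM j := by
          apply Finset.sum_subset (Finset.subset_univ _)
          intro j _ hj
          have : j ∉ Set.range snf.f := by simpa [Finset.mem_image] using hj
          rw [h2 j this, zero_smul]
        rw [hm', ← hsub, Finset.sum_image (fun i _ j _ h => snf.f.injective h)]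
        refine Finset.sum_congr rfl fun i _ => ?_
        rw [snf.snf i, hd i, smul_smul, mul_comm]
      rw [key]
      exact Submodule.sum_mem _ fun i _ => Submodule.smul_mem _ _ (snf.bN i).2
    · push_neg at h2
      obtain ⟨j, hj, hcj⟩ := h2
      refine ⟨((2 * snf.bM.repr m j : ℚ)⁻¹) •
        ((Int.castAddHom ℚ).toIntLinearMap ∘ₗ snf.bM.coord j), fun x hx => ⟨0, by
          simp [Basis.coord_apply, hNzero x hx j hj]⟩, ?_⟩
      intro z hz
      have hc : ((snf.bM.repr m j : ℚ)) ≠ 0 := by exact_mod_cast hcj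
      simp only [LinearMap.smul_apply, LinearMap.coe_comp, Function.comp_apply,
        AddMonoidHom.coe_toIntLinearMap, Int.coe_castAddHom, Basis.coord_apply,
        smul_eq_mul] at hz
      rw [inv_mul_eq_div, div_eq_iff (by simpa using hc)] at hz
      have hz' : (snf.bM.repr m j) = z * (2 * snf.bM.repr m j) := by exact_mod_cast hz
      have : snf.bM.repr m j * (1 - 2 * z) = 0 := by ring_nf; linarith [hz']
      rcases mul_eq_zero.mp this with h | h
      · exact hcj h
      · omega
  · push_neg at h1
    obtain ⟨i, hi⟩ := h1
    refine ⟨((snf.a i : ℚ)⁻¹) •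
      ((Int.castAddHom ℚ).toIntLinearMap ∘ₗ snf.bM.coord (snf.f i)), ?_, ?_⟩
    · intro x hx
      obtain ⟨d, hd⟩ := hNcoord x hx i
      refine ⟨d, ?_⟩
      simp only [LinearMap.smul_apply, LinearMap.coe_comp, Function.comp_apply,
        AddMonoidHom.coe_toIntLinearMap, Int.coe_castAddHom, Basis.coord_apply, hd,
        smul_eq_mul]
      push_cast
      rw [inv_mul_eq_div, mul_comm, mul_div_assoc, div_self (by exact_mod_cast ha i), mul_one]
    · intro z hz
      apply hi
      simp only [LinearMap.smul_apply, LinearMap.coe_comp, Function.comp_apply,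
        AddMonoidHom.coe_toIntLinearMap, Int.coe_castAddHom, Basis.coord_apply,
        smul_eq_mul] at hz
      rw [inv_mul_eq_div, div_eq_iff (by exact_mod_cast ha i)] at hz
      refine ⟨z, ?_⟩; rw [mul_comm]; exact_mod_cast hz

open Module

theorem exists_retraction {M : Type*} [AddCommGroup M] [Module.Free ℤ M]
    [Module.Finite ℤ M] (K : Submodule ℤ M)
    (hK : ∀ (c : ℤ) (x : M), c ≠ 0 → c • x ∈ K → x ∈ K) :
    ∃ pr : M →ₗ[ℤ] K, ∀ k : K, pr (k : M) = k := by
  haveI : NoZeroSMulDivisors ℤ (M ⧸ K) := by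
    constructor
    intro c x h
    obtain ⟨y, rfl⟩ := Submodule.mkQ_surjective K x
    rcases eq_or_ne c 0 with rfl | hc
    · exact Or.inl rfl
    · refine Or.inr ?_
      rw [← map_smul, Submodule.mkQ_apply, Submodule.Quotient.mk_eq_zero] at h
      rw [Submodule.mkQ_apply, Submodule.Quotient.mk_eq_zero]
      exact hK c y hc h
  haveI : Module.Free ℤ (M ⧸ K) := Module.free_of_finite_type_torsion_free'
  obtain ⟨s, hs⟩ := Module.projective_lifting_property K.mkQ
    (LinearMap.id : (M ⧸ K) →ₗ[ℤ] (M ⧸ K)) (Submodule.mkQ_surjective K)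
  have hmem : ∀ x : M, x - s (K.mkQ x) ∈ K := by
    intro x
    rw [← Submodule.Quotient.mk_eq_zero, ← Submodule.mkQ_apply, map_sub]
    have : K.mkQ (s (K.mkQ x)) = K.mkQ x := by
      have := congrArg (fun f => f (K.mkQ x)) hs
      simpa using this
    rw [this, sub_self]
  refine ⟨(LinearMap.id - s ∘ₗ K.mkQ).codRestrict K (fun x => hmem x), ?_⟩
  intro k
  ext
  simp only [LinearMap.codRestrict_apply, LinearMap.sub_apply, LinearMap.id_apply,
    LinearMap.coe_comp, Function.comp_apply]
  have : K.mkQ (k : M) = 0 := by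
    rw [Submodule.mkQ_apply, Submodule.Quotient.mk_eq_zero]; exact k.2
  rw [this, map_zero, sub_zero]

theorem norm_surj {π : Type*} [Group π] {M : Type*} [AddCommGroup M]
    [DistribMulAction π M] [Module.Free ℤ M] [Module.Finite ℤ M]
    (H : Subgroup π) [Fintype H] (m : M)
    (hfix : ∀ h : H, (h : π) • m = m)
    (hdiv : ∀ χ : M →ₗ[ℤ] ℤ, (∀ (h : H) (x : M), χ ((h : π) • x) = χ x) →
      ∃ z : ℤ, χ m = (Fintype.card H : ℤ) * z) :
    ∃ m' : M, ∑ h : H, (h : π) • m' = m := by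
  classical
  let act : π → M →ₗ[ℤ] M := fun g => (DistribMulAction.toAddMonoidHom M g).toIntLinearMap
  have act_apply : ∀ (g : π) (x : M), act g x = g • x := fun _ _ => rfl
  let Nmap : M →ₗ[ℤ] M := ∑ h : H, act (h : π)
  have Nmap_apply : ∀ x, Nmap x = ∑ h : H, (h : π) • x := by
    intro x
    simp only [Nmap, LinearMap.sum_apply]
    exact Finset.sum_congr rfl fun h _ => rfl
  let K : Submodule ℤ M :=
    { carrier := {x | ∀ h : H, (h : π) • x = x}
      add_mem' := fun ha hb h => by rw [smul_add, ha h, hb h]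
      zero_mem' := fun h => smul_zero _
      smul_mem' := fun c x hx h => by
        rw [show (h : π) • c • x = c • ((h : π) • x) from (act (h:π)).map_smul c x, hx h] }
  have hNsmul_right : ∀ (h : H) (x : M), Nmap ((h : π) • x) = Nmap x := by
    intro h x
    rw [Nmap_apply, Nmap_apply]
    refine Fintype.sum_equiv (Equiv.mulRight h) _ _ fun h' => ?_
    simp only [Equiv.coe_mulRight]
    rw [Subgroup.coe_mul, mul_smul]
  have hNK : ∀ x, Nmap x ∈ K := by
    intro x h
    rw [Nmap_apply, Finset.smul_sum]
    refine Fintype.sum_equiv (Equiv.mulLeft h) _ _ fun h' => ?_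
    simp only [Equiv.coe_mulLeft]
    rw [Subgroup.coe_mul, mul_smul]
  by_contra hns
  push_neg at hns
  have hmrange : m ∉ LinearMap.range Nmap := by
    rintro ⟨m', hm'⟩
    exact hns m' (by rw [← Nmap_apply, hm'])
  -- instances on K
  haveI : IsNoetherian ℤ M := isNoetherian_of_isNoetherianRing_of_finite ℤ M
  haveI : Module.Finite ℤ K := Module.Finite.iff_fg.mpr (IsNoetherian.noetherian K)
  haveI : Module.Free ℤ K := Module.free_of_finite_type_torsion_free'
  let NK : Submodule ℤ K := (LinearMap.range Nmap).comap K.subtype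
  have hmK : (⟨m, fun h => hfix h⟩ : K) ∉ NK := hmrange
  obtain ⟨u0, hu0, hu0m⟩ := bdual NK _ hmK
  have hpure : ∀ (c : ℤ) (x : M), c ≠ 0 → c • x ∈ K → x ∈ K := by
    intro c x hc hcx h
    have e1 : c • ((h : π) • x) = (h : π) • (c • x) := ((act (h : π)).map_smul c x).symm
    have h1 : c • ((h : π) • x - x) = 0 := by
      rw [smul_sub, e1, hcx h, sub_self]
    rcases smul_eq_zero.mp h1 with h2 | h2
    · exact absurd h2 hc
    · exact sub_eq_zero.mp h2
  obtain ⟨pr, hpr⟩ := exists_retraction K hpure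
  let u : M →ₗ[ℤ] ℚ := u0 ∘ₗ pr
  have hint : ∀ x : M, ∃ z : ℤ, u (Nmap x) = (z : ℚ) := by
    intro x
    have h1 : Nmap x ∈ K := hNK x
    have h2 : pr (Nmap x) = ⟨Nmap x, h1⟩ := hpr ⟨Nmap x, h1⟩
    have h3 : (⟨Nmap x, h1⟩ : K) ∈ NK := ⟨x, rfl⟩
    simpa [u, h2] using hu0 _ h3
  choose zfun hz using hint
  have castinj : Function.Injective (Int.cast : ℤ → ℚ) := Int.cast_injective
  let χ : M →+ ℤ :=
    { toFun := fun x => zfun x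
      map_zero' := castinj (by rw [← hz 0]; simp)
      map_add' := fun x y => castinj (by
        push_cast
        rw [← hz x, ← hz y, ← hz (x + y), map_add, map_add]) }
  have hinv : ∀ (h : H) (x : M), χ.toIntLinearMap ((h : π) • x) = χ.toIntLinearMap x := by
    intro h x
    exact castinj (by
      show ((zfun _ : ℤ) : ℚ) = ((zfun _ : ℤ) : ℚ)
      rw [← hz, ← hz, hNsmul_right])
  obtain ⟨z, hzm⟩ := hdiv χ.toIntLinearMap hinv
  have hNm : Nmap m = (Fintype.card H : ℤ) • m := by
    rw [Nmap_apply]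
    rw [show ∑ h : H, (h : π) • m = ∑ _h : H, m from Finset.sum_congr rfl fun h _ => hfix h]
    rw [Finset.sum_const, Finset.card_univ]
    exact (natCast_zsmul m _).symm
  have hum : u m = u0 ⟨m, fun h => hfix h⟩ := by
    have := hpr ⟨m, fun h => hfix h⟩
    simp only [u, LinearMap.coe_comp, Function.comp_apply]
    rw [this]
  have key : ((zfun m : ℤ) : ℚ) = (Fintype.card H : ℚ) * u0 ⟨m, fun h => hfix h⟩ := by
    rw [← hz m, hNm, map_smul, hum, zsmul_eq_mul]
    push_cast
    ring
  have hcard : (Fintype.card H : ℚ) ≠ 0 := by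
    exact_mod_cast Fintype.card_ne_zero
  apply hu0m z
  have h6 : (Fintype.card H : ℚ) * u0 ⟨m, fun h => hfix h⟩
      = (Fintype.card H : ℚ) * (z : ℚ) := by
    rw [← key]
    exact_mod_cast hzm
  exact mul_left_cancel₀ hcard h6

open Finsupp

theorem perm_hneg {G : Type*} [Group G] [Fintype G] {ι : Type*} [Fintype ι]
    (σ : G →* Equiv.Perm ι) (f : ι →₀ ℤ)
    (hf : ∑ g : G, Finsupp.equivMapDomain (σ g) f = 0) :
    f ∈ AddSubgroup.closure {x : ι →₀ ℤ |
      ∃ (g : G) (y : ι →₀ ℤ), x = Finsupp.equivMapDomain (σ g) y - y} := by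
  classical
  let st : Setoid ι :=
    ⟨fun j k => ∃ g, σ g j = k,
      ⟨fun j => ⟨1, by simp⟩,
       fun {j k} h => by
        obtain ⟨g, hg⟩ := h
        exact ⟨g⁻¹, by rw [← hg, map_inv]; simp⟩,
       fun {j k l} h h' => by
        obtain ⟨g, hg⟩ := h
        obtain ⟨g', hg'⟩ := h'
        exact ⟨g' * g, by rw [map_mul]; simp [hg, hg']⟩⟩⟩
  let r : ι → ι := fun j => (@Quotient.mk ι st j).out
  have rrel : ∀ j, ∃ g, σ g (r j) = j := fun j => @Quotient.mk_out ι st j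
  have rconst : ∀ j k, (∃ g, σ g j = k) → r j = r k := by
    intro j k h
    show (@Quotient.mk ι st j).out = (@Quotient.mk ι st k).out
    congr 1
    exact Quotient.sound h
  have rid : ∀ j, r (r j) = r j := fun j => rconst (r j) j (rrel j)
  -- orbit sums vanish
  have hOrb : ∀ j : ι, ∑ k ∈ Finset.univ.filter (fun k => r k = r j), f k = 0 := by
    intro j
    set j₀ := r j with hj₀
    have h0 : (0 : ℤ) = ∑ g : G, f ((σ g)⁻¹ j₀) := by
      have := congrArg (fun v : ι →₀ ℤ => v j₀) hf
      simp only [Finsupp.coe_zero, Pi.zero_apply] at this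
      rw [← this, Finsupp.finset_sum_apply]
      exact Finset.sum_congr rfl fun g _ => by
        rw [Finsupp.equivMapDomain_apply]; rfl
    have h1 : (0 : ℤ) = ∑ g : G, f (σ g j₀) := by
      rw [h0]
      refine (Fintype.sum_equiv (Equiv.inv G) _ _ fun g => ?_).symm
      simp [map_inv]
    -- group the sum by the value σ g j₀
    rw [Finset.sum_comp (fun k => f k) (fun g : G => σ g j₀)] at h1
    have himage : Finset.univ.image (fun g : G => σ g j₀)
        = Finset.univ.filter (fun k => r k = r j) := by
      ext k
      simp only [Finset.mem_image, Finset.mem_filter, Finset.mem_univ, true_and]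
      constructor
      · rintro ⟨g, hg⟩
        rw [← (rconst j₀ k ⟨g, hg⟩), hj₀, rid]
      · intro hk
        obtain ⟨g, hg⟩ := rrel k
        rw [hk, ← hj₀] at hg
        exact ⟨g, hg⟩
    -- fibers have equal cardinality
    have hfib : ∀ k ∈ Finset.univ.image (fun g : G => σ g j₀),
        (Finset.univ.filter (fun g : G => σ g j₀ = k)).card
          = (Finset.univ.filter (fun g : G => σ g j₀ = j₀)).card := by
      intro k hk
      simp only [Finset.mem_image, Finset.mem_univ, true_and] at hk
      obtain ⟨a, ha⟩ := hk
      refine Finset.card_nbij' (fun g => a⁻¹ * g) (fun g => a * g) ?_ ?_ ?_ ?_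
      · intro g hg
        simp only [Finset.coe_filter, Finset.mem_filter, Finset.mem_univ, true_and, Set.mem_setOf_eq] at hg ⊢
        rw [map_mul, map_inv, Equiv.Perm.mul_apply, hg, ← ha]
        simp
      · intro g hg
        simp only [Finset.coe_filter, Finset.mem_filter, Finset.mem_univ, true_and, Set.mem_setOf_eq] at hg ⊢
        rw [map_mul, Equiv.Perm.mul_apply, hg, ha]
      · intro g _; group
      · intro g _; group
    have hone : (Finset.univ.filter (fun g : G => σ g j₀ = j₀)).card ≠ 0 := by
      rw [Finset.card_ne_zero]
      exact ⟨1, Finset.mem_filter.mpr ⟨Finset.mem_univ 1, by simp⟩⟩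
    rw [Finset.sum_congr rfl (fun k hk => by rw [hfib k hk])] at h1
    rw [← Finset.smul_sum, himage] at h1
    have := h1.symm
    rcases smul_eq_zero.mp this with h | h
    · exact absurd h hone
    · exact h
  -- decompose f
  have hsum : ∑ j : ι, Finsupp.single (r j) (f j) = 0 := by
    ext k
    rw [Finsupp.finset_sum_apply]
    simp only [Finsupp.single_apply, Finsupp.coe_zero, Pi.zero_apply]
    rw [← Finset.sum_filter]
    by_cases hk : r k = k
    · have : Finset.univ.filter (fun x => r x = k) = Finset.univ.filter (fun x => r x = r k) := by
        apply Finset.filter_congr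
        intro x _
        rw [hk]
      rw [this]
      exact hOrb k
    · have : Finset.univ.filter (fun x : ι => r x = k) = ∅ := by
        apply Finset.filter_false_of_mem
        intro x _ hx
        exact hk (by rw [← hx, rid, hx])
      rw [this, Finset.sum_empty]
  have hdecomp : f = ∑ j : ι, (Finsupp.single j (f j) - Finsupp.single (r j) (f j)) := by
    rw [Finset.sum_sub_distrib, hsum, sub_zero]
    ext k
    rw [Finsupp.finset_sum_apply]
    simp only [Finsupp.single_apply]
    rw [Finset.sum_ite_eq' Finset.univ k (fun j => f j)]
    simp
  rw [hdecomp]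
  apply AddSubgroup.sum_mem
  intro j _
  apply AddSubgroup.subset_closure
  obtain ⟨g, hg⟩ := rrel j
  refine ⟨g, Finsupp.single (r j) (f j), ?_⟩
  rw [Finsupp.equivMapDomain_single, hg]

set_option linter.unusedSectionVars false

open Finsupp Module

namespace FlabbyRes

variable (π : Type) [Group π] [Fintype π] (M : Type) [AddCommGroup M]
  [DistribMulAction π M] [Module.Free ℤ M] [Module.Finite ℤ M]

/-- The submodule of `H`-invariant functionals. -/
def invDual (H : Subgroup π) : Submodule ℤ (M →ₗ[ℤ] ℤ) where
  carrier := {χ | ∀ h ∈ H, ∀ x : M, χ (h • x) = χ x}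
  zero_mem' := fun _ _ _ => rfl
  add_mem' := fun {χ₁ χ₂} h1 h2 h hh x => by
    simp only [LinearMap.add_apply, h1 h hh x, h2 h hh x]
  smul_mem' := fun c χ hχ h hh x => by
    simp only [LinearMap.smul_apply, hχ h hh x]

lemma invDual_bot_mem (χ : M →ₗ[ℤ] ℤ) : χ ∈ invDual π M ⊥ := by
  intro h hh x
  rcases Subgroup.mem_bot.mp hh with rfl
  rw [one_smul]

noncomputable instance : Fintype (Subgroup π) := by
  haveI : Finite (Subgroup π) :=
    Finite.of_injective (fun H : Subgroup π => (H : Set π)) SetLike.coe_injective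
  exact Fintype.ofFinite _

noncomputable instance (H : Subgroup π) : Fintype (π ⧸ H) := Fintype.ofFinite _

/-- A chosen finite generating set for the invariant functionals. -/
noncomputable def T (H : Subgroup π) : Finset (M →ₗ[ℤ] ℤ) :=
  (IsNoetherian.noetherian (invDual π M H)).choose

lemma T_span (H : Subgroup π) :
    Submodule.span ℤ ((T π M H : Set (M →ₗ[ℤ] ℤ))) = invDual π M H :=
  (IsNoetherian.noetherian (invDual π M H)).choose_spec

lemma T_mem (H : Subgroup π) {χ : M →ₗ[ℤ] ℤ} (hχ : χ ∈ T π M H) :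
    χ ∈ invDual π M H := by
  rw [← T_span]
  exact Submodule.subset_span hχ

/-- The index type of the permutation lattice. -/
abbrev It : Type := Σ H : Subgroup π, (π ⧸ H) × {χ : M →ₗ[ℤ] ℤ // χ ∈ T π M H}

noncomputable instance : Fintype (It π M) := by
  haveI : Finite (It π M) := by
    unfold It
    infer_instance
  exact Fintype.ofFinite _

/-- The permutation action of `π` on the index type. -/
noncomputable def σhom : π →* Equiv.Perm (It π M) where
  toFun g :=
    { toFun := fun x => ⟨x.1, g • x.2.1, x.2.2⟩
      invFun := fun x => ⟨x.1, g⁻¹ • x.2.1, x.2.2⟩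
      left_inv := by rintro ⟨H, c, t⟩; simp <;> rfl
      right_inv := by rintro ⟨H, c, t⟩; simp <;> rfl }
  map_one' := by
    refine Equiv.ext fun x => ?_
    rcases x with ⟨H, c, t⟩
    simp <;> rfl
  map_mul' := fun g g' => by
    refine Equiv.ext fun x => ?_
    rcases x with ⟨H, c, t⟩
    simp [mul_smul] <;> rfl

lemma σhom_apply (g : π) (H : Subgroup π) (c : π ⧸ H)
    (t : {χ : M →ₗ[ℤ] ℤ // χ ∈ T π M H}) :
    σhom π M g ⟨H, c, t⟩ = ⟨H, g • c, t⟩ := rfl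

lemma σhom_symm_apply (g : π) (H : Subgroup π) (c : π ⧸ H)
    (t : {χ : M →ₗ[ℤ] ℤ // χ ∈ T π M H}) :
    (σhom π M g).symm ⟨H, c, t⟩ = ⟨H, g⁻¹ • c, t⟩ := rfl

/-- The coordinates of the embedding. -/
noncomputable def coordFun (x : M) : It π M → ℤ := fun j =>
  Quotient.liftOn' j.2.1 (fun g => j.2.2.1 (g⁻¹ • x)) (by
    intro a b hab
    have h : a⁻¹ * b ∈ j.1 := QuotientGroup.leftRel_apply.mp hab
    have := (T_mem π M j.1 j.2.2.2) (a⁻¹ * b)⁻¹ (inv_mem h) (a⁻¹ • x)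
    try simp only at this ⊢
    rw [← this, ← mul_smul]
    congr 2
    group)

lemma coordFun_mk (x : M) (H : Subgroup π) (g : π)
    (t : {χ : M →ₗ[ℤ] ℤ // χ ∈ T π M H}) :
    coordFun π M x ⟨H, QuotientGroup.mk g, t⟩ = t.1 (g⁻¹ • x) := rfl

/-- The embedding `M → P` as an additive hom. -/
noncomputable def iHom : M →+ (It π M →₀ ℤ) where
  toFun x := Finsupp.equivFunOnFinite.symm (coordFun π M x)
  map_zero' := by
    ext j
    rcases j with ⟨H, c, t⟩
    induction c using Quotient.inductionOn' with
    | h g =>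
      simp only [Finsupp.coe_equivFunOnFinite_symm, Finsupp.coe_zero, Pi.zero_apply]
      rw [show (Quotient.mk'' g : π ⧸ H) = QuotientGroup.mk g from rfl, coordFun_mk,
        smul_zero, map_zero]
  map_add' := fun x y => by
    ext j
    rcases j with ⟨H, c, t⟩
    induction c using Quotient.inductionOn' with
    | h g =>
      simp only [Finsupp.coe_equivFunOnFinite_symm, Finsupp.coe_add, Pi.add_apply]
      rw [show (Quotient.mk'' g : π ⧸ H) = QuotientGroup.mk g from rfl]
      rw [coordFun_mk, coordFun_mk, coordFun_mk, smul_add, map_add]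

lemma iHom_apply (x : M) (H : Subgroup π) (g : π)
    (t : {χ : M →ₗ[ℤ] ℤ // χ ∈ T π M H}) :
    iHom π M x ⟨H, QuotientGroup.mk g, t⟩ = t.1 (g⁻¹ • x) := rfl

noncomputable def iLin : M →ₗ[ℤ] (It π M →₀ ℤ) := (iHom π M).toIntLinearMap

/-- Action of `g` on the permutation lattice, as a linear map. -/
noncomputable def Plin (g : π) : (It π M →₀ ℤ) →ₗ[ℤ] (It π M →₀ ℤ) :=
  (Finsupp.domLCongr (σhom π M g) : (It π M →₀ ℤ) ≃ₗ[ℤ] (It π M →₀ ℤ)).toLinearMap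

lemma Plin_apply (g : π) (f : It π M →₀ ℤ) :
    Plin π M g f = Finsupp.equivMapDomain (σhom π M g) f := rfl

lemma Plin_one (f : It π M →₀ ℤ) : Plin π M 1 f = f := by
  rw [Plin_apply, map_one, show ((1 : Equiv.Perm (It π M))) = Equiv.refl _ from rfl,
    Finsupp.equivMapDomain_refl]

lemma Plin_mul (g g' : π) (f : It π M →₀ ℤ) :
    Plin π M (g * g') f = Plin π M g (Plin π M g' f) := by
  simp only [Plin_apply, map_mul]
  rw [show (σhom π M g * σhom π M g') = (σhom π M g').trans (σhom π M g) from rfl,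
    Finsupp.equivMapDomain_trans]

lemma iHom_equivariant (g : π) (x : M) :
    iHom π M (g • x) = Plin π M g (iHom π M x) := by
  ext j
  rcases j with ⟨H, c, t⟩
  induction c using Quotient.inductionOn' with
  | h a =>
    rw [Plin_apply, Finsupp.equivMapDomain_apply]
    rw [show (Quotient.mk'' a : π ⧸ H) = QuotientGroup.mk a from rfl]
    rw [iHom_apply, σhom_symm_apply]
    rw [show (g⁻¹ • (QuotientGroup.mk a : π ⧸ H)) = QuotientGroup.mk (g⁻¹ * a) from rfl]
    rw [iHom_apply, ← mul_smul]
    congr 2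
    group

/-- The submodule `i(M)`. -/
noncomputable def Rsub : Submodule ℤ (It π M →₀ ℤ) := LinearMap.range (iLin π M)

/-- The cokernel lattice `F`. -/
noncomputable def Fmod : Type := (It π M →₀ ℤ) ⧸ Rsub π M

noncomputable instance : AddCommGroup (Fmod π M) :=
  inferInstanceAs (AddCommGroup ((It π M →₀ ℤ) ⧸ Rsub π M))

noncomputable instance : Module ℤ (Fmod π M) :=
  inferInstanceAs (Module ℤ ((It π M →₀ ℤ) ⧸ Rsub π M))

lemma Rsub_stable (g : π) : Rsub π M ≤ (Rsub π M).comap (Plin π M g) := by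
  rintro x ⟨m, rfl⟩
  exact ⟨g • m, iHom_equivariant π M g m⟩

/-- The induced action on the quotient. -/
noncomputable def Fact (g : π) : Fmod π M →ₗ[ℤ] Fmod π M :=
  Submodule.mapQ (Rsub π M) (Rsub π M) (Plin π M g) (Rsub_stable π M g)

lemma Fact_mk (g : π) (f : It π M →₀ ℤ) :
    Fact π M g (Submodule.Quotient.mk f) = Submodule.Quotient.mk (Plin π M g f) := rfl

noncomputable instance : DistribMulAction π (Fmod π M) where
  smul g x := Fact π M g x
  one_smul := fun x => by
    obtain ⟨f, rfl⟩ := Submodule.Quotient.mk_surjective (Rsub π M) x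
    show Fact π M 1 _ = _
    rw [Fact_mk, Plin_one]
  mul_smul := fun g g' x => by
    obtain ⟨f, rfl⟩ := Submodule.Quotient.mk_surjective (Rsub π M) x
    show Fact π M (g * g') _ = Fact π M g (Fact π M g' _)
    rw [Fact_mk, Fact_mk, Fact_mk, Plin_mul]
  smul_zero := fun g => map_zero (Fact π M g)
  smul_add := fun g x y => map_add (Fact π M g) x y

/-- The projection onto the cokernel. -/
noncomputable def mkF : (It π M →₀ ℤ) →ₗ[ℤ] Fmod π M := (Rsub π M).mkQ

lemma mkF_surjective : Function.Surjective (mkF π M) :=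
  Submodule.Quotient.mk_surjective _

lemma mkF_zero_iff (f : It π M →₀ ℤ) : mkF π M f = 0 ↔ f ∈ Rsub π M :=
  Submodule.Quotient.mk_eq_zero _

lemma Fsmul_mk (g : π) (f : It π M →₀ ℤ) :
    g • (mkF π M f) = mkF π M (Plin π M g f) :=
  Fact_mk π M g f

section Arithmetic

/-- Functionals whose value at `m` is divisible by `c`. -/
def evalW (m : M) (c : ℤ) : Submodule ℤ (M →ₗ[ℤ] ℤ) where
  carrier := {χ | c ∣ χ m}
  zero_mem' := dvd_zero c
  add_mem' := fun h1 h2 => by simpa using dvd_add h1 h2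
  smul_mem' := fun z χ hχ => by
    simp only [Set.mem_setOf_eq, LinearMap.smul_apply, smul_eq_mul]
    exact Dvd.dvd.mul_left hχ z

lemma dvd_of_T (H : Subgroup π) (m : M) (c : ℤ)
    (h : ∀ χ : {χ : M →ₗ[ℤ] ℤ // χ ∈ T π M H}, c ∣ χ.1 m) :
    ∀ χ ∈ invDual π M H, c ∣ χ m := by
  intro χ hχ
  have hle : invDual π M H ≤ evalW M m c := by
    rw [← T_span]
    exact Submodule.span_le.mpr (fun χ' hχ' => h ⟨χ', hχ'⟩)
  exact hle hχ

lemma eq_smul_of_dvd (m : M) (c : ℤ) (h : ∀ χ : M →ₗ[ℤ] ℤ, c ∣ χ m) :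
    ∃ m' : M, m = c • m' := by
  classical
  let b := Module.Free.chooseBasis ℤ M
  choose d hd using fun j => h (b.coord j)
  refine ⟨∑ j, d j • b j, ?_⟩
  have := b.sum_repr m
  rw [← this, Finset.smul_sum]
  refine Finset.sum_congr rfl fun j _ => ?_
  rw [smul_smul, ← hd j]
  rfl

lemma iHom_block (H : Subgroup π) (χ : {χ : M →ₗ[ℤ] ℤ // χ ∈ T π M H}) (x : M) :
    iHom π M x ⟨H, QuotientGroup.mk 1, χ⟩ = χ.1 x := by
  rw [iHom_apply]
  simp

lemma iHom_injective : Function.Injective (iHom π M) := by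
  rw [injective_iff_map_eq_zero]
  intro m hm
  have h0 : ∀ χ : M →ₗ[ℤ] ℤ, (0 : ℤ) ∣ χ m := by
    intro χ
    apply dvd_of_T π M ⊥ m 0 _ χ (invDual_bot_mem π M χ)
    intro t
    rw [← iHom_block π M ⊥ t m, hm]
    simp
  obtain ⟨m', hm'⟩ := eq_smul_of_dvd M m 0 h0
  rw [hm', zero_smul]

lemma Rsub_pure (c : ℤ) (x : It π M →₀ ℤ) (hc : c ≠ 0) (hcx : c • x ∈ Rsub π M) :
    x ∈ Rsub π M := by
  obtain ⟨m, hm⟩ := hcx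
  have hdvd : ∀ χ : M →ₗ[ℤ] ℤ, c ∣ χ m := by
    intro χ
    apply dvd_of_T π M ⊥ m c _ χ (invDual_bot_mem π M χ)
    intro t
    have h1 : t.1 m = c * x ⟨⊥, QuotientGroup.mk 1, t⟩ := by
      rw [← iHom_block π M ⊥ t m]
      show (iLin π M m) _ = _
      rw [hm]
      simp
    exact ⟨_, h1⟩
  obtain ⟨m', hm'⟩ := eq_smul_of_dvd M m c hdvd
  refine ⟨m', ?_⟩
  have h2 : c • (iLin π M m') = c • x := by
    rw [← map_smul, ← hm', hm]
  exact smul_right_injective _ hc h2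

noncomputable instance : Module.Finite ℤ (Fmod π M) :=
  Module.Finite.of_surjective (mkF π M) (mkF_surjective π M)

instance : NoZeroSMulDivisors ℤ (Fmod π M) := by
  constructor
  intro c x h
  rcases eq_or_ne c 0 with rfl | hc
  · exact Or.inl rfl
  · refine Or.inr ?_
    obtain ⟨f, rfl⟩ := mkF_surjective π M x
    rw [← map_smul, mkF_zero_iff] at h
    rw [mkF_zero_iff]
    exact Rsub_pure π M c f hc h

noncomputable instance : Module.Free ℤ (Fmod π M) :=
  Module.free_of_finite_type_torsion_free'

end Arithmetic

section Flabby

lemma norm_block (H : Subgroup π) [Fintype H] (p : It π M →₀ ℤ)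
    (χ : {χ : M →ₗ[ℤ] ℤ // χ ∈ T π M H}) :
    (∑ h : H, Plin π M (h : π) p) ⟨H, QuotientGroup.mk 1, χ⟩
      = (Fintype.card H : ℤ) * p ⟨H, QuotientGroup.mk 1, χ⟩ := by
  rw [Finsupp.finset_sum_apply]
  have heach : ∀ h : H, (Plin π M (h : π) p) ⟨H, QuotientGroup.mk 1, χ⟩
      = p ⟨H, QuotientGroup.mk 1, χ⟩ := by
    intro h
    have hc : ((h : π)⁻¹ • (QuotientGroup.mk 1 : π ⧸ H)) = QuotientGroup.mk 1 := by
      rw [show ((h : π)⁻¹ • (QuotientGroup.mk 1 : π ⧸ H))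
        = QuotientGroup.mk ((h:π)⁻¹ * 1) from rfl, QuotientGroup.eq]
      simpa using h.2
    rw [Plin_apply, Finsupp.equivMapDomain_apply, σhom_symm_apply, hc]
  rw [Finset.sum_congr rfl fun h _ => heach h, Finset.sum_const, Finset.card_univ,
    nsmul_eq_mul]

lemma Plin_norm_invariant (H : Subgroup π) [Fintype H] (h : H) (f : It π M →₀ ℤ) :
    Plin π M (h : π) (∑ h' : H, Plin π M (h' : π) f) = ∑ h' : H, Plin π M (h' : π) f := by
  rw [map_sum]
  refine Fintype.sum_equiv (Equiv.mulLeft h) _ _ fun h' => ?_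
  rw [← Plin_mul]
  simp only [Equiv.coe_mulLeft]
  rw [Subgroup.coe_mul]

theorem isFlabby_F : IsFlabby π (Fmod π M) := by
  intro H instH m hm
  obtain ⟨f, rfl⟩ := mkF_surjective π M m
  have h1 : mkF π M (∑ h : H, Plin π M (h : π) f) = 0 := by
    rw [map_sum, ← hm]
    exact Finset.sum_congr rfl fun h _ => (Fsmul_mk π M (h : π) f).symm
  rw [mkF_zero_iff] at h1
  obtain ⟨m₀, hm₀⟩ := h1
  have hfix : ∀ h : H, (h : π) • m₀ = m₀ := by
    intro h
    apply iHom_injective π M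
    show iHom π M ((h : π) • m₀) = iHom π M m₀
    rw [iHom_equivariant]
    show Plin π M (h : π) (iLin π M m₀) = iLin π M m₀
    rw [hm₀]
    exact Plin_norm_invariant π M H h f
  have hdiv : ∀ χ : M →ₗ[ℤ] ℤ, (∀ (h : H) (x : M), χ ((h : π) • x) = χ x) →
      ∃ z : ℤ, χ m₀ = (Fintype.card H : ℤ) * z := by
    intro χ hχ
    have hmem : χ ∈ invDual π M H := fun h hh x => hχ ⟨h, hh⟩ x
    have hdvd : (Fintype.card H : ℤ) ∣ χ m₀ := by
      apply dvd_of_T π M H m₀ _ _ χ hmem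
      intro t
      have : t.1 m₀ = (Fintype.card H : ℤ) * f ⟨H, QuotientGroup.mk 1, t⟩ := by
        rw [← iHom_block π M H t m₀]
        show (iLin π M m₀) _ = _
        rw [hm₀, norm_block]
      exact ⟨_, this⟩
    exact hdvd
  obtain ⟨m', hm'⟩ := norm_surj H m₀ hfix hdiv
  set f' := f - iLin π M m' with hf'
  have hNf' : ∑ h : H, Finsupp.equivMapDomain ((σhom π M).comp H.subtype h) f' = 0 := by
    have : ∀ h : H, Finsupp.equivMapDomain ((σhom π M).comp H.subtype h) f'
        = Plin π M (h : π) f' := fun h => rfl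
    rw [Finset.sum_congr rfl fun h _ => this h]
    have hsub : ∑ h : H, Plin π M (h : π) f'
        = (∑ h : H, Plin π M (h : π) f) - ∑ h : H, Plin π M (h : π) (iLin π M m') := by
      rw [← Finset.sum_sub_distrib]
      exact Finset.sum_congr rfl fun h _ => by rw [hf', map_sub]
    rw [hsub]
    have : ∑ h : H, Plin π M ((h : π)) (iLin π M m') = iLin π M m₀ := by
      have h1 : ∀ h : H, Plin π M ((h:π)) (iLin π M m') = iLin π M ((h:π) • m') :=
        fun h => (iHom_equivariant π M ((h:π)) m').symm
      rw [Finset.sum_congr rfl fun h _ => h1 h, ← map_sum, hm']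
    rw [this, ← hm₀, sub_self]
  have hcl := perm_hneg ((σhom π M).comp H.subtype) f' hNf'
  have himg : mkF π M f' = mkF π M f := by
    rw [hf', map_sub, sub_eq_self, mkF_zero_iff]
    exact ⟨m', rfl⟩
  rw [← himg]
  have hmap : mkF π M f' ∈ (AddSubgroup.closure {x : It π M →₀ ℤ |
      ∃ (g : H) (y : It π M →₀ ℤ),
        x = Finsupp.equivMapDomain ((σhom π M).comp H.subtype g) y - y}).map
      (mkF π M).toAddMonoidHom :=
    AddSubgroup.mem_map_of_mem _ hcl
  rw [AddMonoidHom.map_closure] at hmap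
  refine AddSubgroup.closure_mono ?_ hmap
  rintro x ⟨y, ⟨g, y', rfl⟩, rfl⟩
  refine ⟨g, mkF π M y', ?_⟩
  show (mkF π M).toAddMonoidHom _ = _
  rw [show Finsupp.equivMapDomain ((σhom π M).comp H.subtype g) y'
    = Plin π M ((g : π)) y' from rfl]
  show mkF π M _ = _
  rw [map_sub, Fsmul_mk]

end Flabby

end FlabbyRes

end AuxiliaryForFlabbyResolution

/-- Every π-lattice M admits a flabby resolution
0 → M → P → F → 0 with P a permutation lattice and F flabby. -/
theorem exists_flabby_resolution (π : Type) [Group π] [Fintype π]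
    (M : Type) [AddCommGroup M] [DistribMulAction π M]
    [Module.Free ℤ M] [Module.Finite ℤ M] :
    ∃ F : GLat π, (Module.Free ℤ F.carrier ∧ Module.Finite ℤ F.carrier) ∧
      FlabbyResolution π M F.carrier := by
  classical
  refine ⟨⟨FlabbyRes.Fmod π M⟩,
    ⟨inferInstanceAs (Module.Free ℤ (FlabbyRes.Fmod π M)),
      inferInstanceAs (Module.Finite ℤ (FlabbyRes.Fmod π M))⟩, ?_⟩
  refine ⟨FlabbyRes.It π M, inferInstance, FlabbyRes.σhom π M, FlabbyRes.iHom π M,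
    (FlabbyRes.mkF π M).toAddMonoidHom, ?_, ?_, ?_, ?_, ?_, ?_⟩
  · intro g m
    exact FlabbyRes.iHom_equivariant π M g m
  · intro g f
    exact (FlabbyRes.Fsmul_mk π M g f).symm
  · exact FlabbyRes.iHom_injective π M
  · exact FlabbyRes.mkF_surjective π M
  · intro f
    rw [show ((FlabbyRes.mkF π M).toAddMonoidHom f = 0) ↔ (FlabbyRes.mkF π M f = 0) from Iff.rfl,
      FlabbyRes.mkF_zero_iff]
    constructor
    · rintro ⟨m, hm⟩
      exact ⟨m, hm⟩
    · rintro ⟨m, hm⟩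
      exact ⟨m, hm⟩
  · exact FlabbyRes.isFlabby_F π M
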